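/- arXiv:2306.12846 — 10 statements merged into one kernel-verified Lean document; each statement's English description precedes it below -/
import Mathlib

section
/- Let V be a complex vector space, 0 ≠ α ∈ V, and let σ, τ : V → V be two reflections with σ·α = τ·α = −α. If there exists m ∈ ℕ, m ≥ 1, such that (στ)^m = id_V, then σ = τ. -/
section Aux

variable {V : Type*} [AddCommGroup V] [Module ℂ V]

/-- A reflection squares to the identity, and `σ v - v ∈ span {α}`. -/
lemma refl_aux (α : V) (σ : V →ₗ[ℂ] V)
    (H : Submodule ℂ V) (hc : IsCompl H (Submodule.span ℂ {α}))
    (hfix : ∀ v ∈ H, σ v = v) (hσα : σ α = -α) :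
    (∀ v, σ (σ v) = v) ∧ (∀ v, σ v - v ∈ Submodule.span ℂ {α}) := by
  have hdecomp : ∀ v : V, ∃ h ∈ H, ∃ c : ℂ, v = h + c • α := by
    intro v
    have hv : v ∈ H ⊔ Submodule.span ℂ {α} := by
      rw [hc.sup_eq_top]; trivial
    obtain ⟨h, hh, s, hs, rfl⟩ := Submodule.mem_sup.mp hv
    obtain ⟨c, rfl⟩ := Submodule.mem_span_singleton.mp hs
    exact ⟨h, hh, c, rfl⟩
  constructor
  · intro v
    obtain ⟨h, hh, c, rfl⟩ := hdecomp v
    simp [map_add, map_smul, hfix h hh, hσα]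
  · intro v
    obtain ⟨h, hh, c, rfl⟩ := hdecomp v
    have : σ (h + c • α) - (h + c • α) = (-2 * c) • α := by
      simp [map_add, map_smul, hfix h hh, hσα]
      module
    rw [this]
    exact Submodule.smul_mem _ _ (Submodule.mem_span_singleton_self α)

end Aux

/-- If `σ, τ : V → V` are two reflections with the same reflection vector `α`
(i.e. each fixes a complementary hyperplane pointwise and sends `α` to `-α`),
and `(στ)^m = id` for some `m ≥ 1`, then `σ = τ`. -/
theorem stmt1 (V : Type*) [AddCommGroup V] [Module ℂ V]
    (α : V) (hα : α ≠ 0) (σ τ : V →ₗ[ℂ] V)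
    (Hσ : Submodule ℂ V) (hσc : IsCompl Hσ (Submodule.span ℂ {α}))
    (hσfix : ∀ v ∈ Hσ, σ v = v) (hσα : σ α = -α)
    (Hτ : Submodule ℂ V) (hτc : IsCompl Hτ (Submodule.span ℂ {α}))
    (hτfix : ∀ v ∈ Hτ, τ v = v) (hτα : τ α = -α)
    (m : ℕ) (hm : 1 ≤ m) (h : (σ ∘ₗ τ) ^ m = LinearMap.id) :
    σ = τ := by
  obtain ⟨hσ2, hσspan⟩ := refl_aux α σ Hσ hσc hσfix hσα
  obtain ⟨hτ2, hτspan⟩ := refl_aux α τ Hτ hτc hτfix hτα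
  set N : V →ₗ[ℂ] V := σ ∘ₗ τ - LinearMap.id with hN
  have hNspan : ∀ v, N v ∈ Submodule.span ℂ {α} := by
    intro v
    have : N v = (σ (τ v) - τ v) + (τ v - v) := by
      simp only [hN, LinearMap.sub_apply, LinearMap.comp_apply, LinearMap.id_apply]; abel
    rw [this]
    exact Submodule.add_mem _ (hσspan (τ v)) (hτspan v)
  have hNα : N α = 0 := by
    simp [hN, hτα, map_neg, hσα]
  have hNN : N ∘ₗ N = 0 := by
    ext v
    obtain ⟨c, hc⟩ := Submodule.mem_span_singleton.mp (hNspan v)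
    simp [LinearMap.comp_apply, ← hc, map_smul, hNα]
  have hρ : σ ∘ₗ τ = LinearMap.id + N := by simp [hN]
  have hpow : ∀ k : ℕ, (σ ∘ₗ τ) ^ k = LinearMap.id + (k : ℂ) • N := by
    intro k
    induction k with
    | zero => simp [Module.End.one_eq_id]
    | succ k ih =>
      have hmulNN : N * N = 0 := hNN
      have : (σ ∘ₗ τ) ^ (k + 1) = ((σ ∘ₗ τ) ^ k) * (σ ∘ₗ τ) := by
        rw [pow_succ]
      rw [this, ih, hρ]
      have : (LinearMap.id + (k : ℂ) • N) * (LinearMap.id + N)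
          = LinearMap.id + ((k : ℂ) + 1) • N + (k : ℂ) • (N * N) := by
        simp only [mul_add, add_mul, mul_smul_comm, smul_mul_assoc]
        simp only [Module.End.mul_eq_comp, LinearMap.id_comp, LinearMap.comp_id]
        push_cast
        module
      rw [this, hmulNN]
      push_cast
      simp
  have hNzero : N = 0 := by
    have := hpow m
    rw [h] at this
    have hmN : (m : ℂ) • N = 0 := by
      have := this.symm
      rwa [add_eq_left] at this
    have hm0 : (m : ℂ) ≠ 0 := by
      exact Nat.cast_ne_zero.mpr (by omega)
    rcases smul_eq_zero.mp hmN with h1 | h2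
    · exact absurd h1 hm0
    · exact h2
  have hστ : σ ∘ₗ τ = LinearMap.id := by
    have h0 : σ ∘ₗ τ - LinearMap.id = 0 := by rw [← hN, hNzero]
    rwa [sub_eq_zero] at h0
  ext v
  have : σ (τ v) = v := by
    have := congrArg (fun f : V →ₗ[ℂ] V => f v) hστ
    simpa using this
  calc σ v = σ (σ (τ v)) := by rw [this]
    _ = τ v := hσ2 (τ v)
end

section
/- Let m ≥ 2 and 1 ≤ k < m/2, and let R = [[-1, 2cos(kπ/m)],[0,1]], T = [[1,0],[2cos(kπ/m),-1]]. If B is a complex 2×2 matrix with RᵀBR = B and TᵀBT = B, then B is a complex scalar multiple of the matrix [[1, −cos(kπ/m)],[−cos(kπ/m), 1]]. In particular, every D_m-invariant bilinear form on the representation ρ_k is symmetric and unique up to scalar. -/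
/-- For `1 ≤ k < m/2`, any `D_m`-invariant bilinear form on `ρ_k` is a scalar
multiple of the symmetric form `[[1, -cos(kπ/m)], [-cos(kπ/m), 1]]`. -/
theorem stmt7 (m k : ℕ) (hm : 2 ≤ m) (hk1 : 1 ≤ k) (hk2 : 2 * k < m)
    (c : ℂ) (hc : c = (Real.cos ((k : ℝ) * Real.pi / (m : ℝ)) : ℂ))
    (R T : Matrix (Fin 2) (Fin 2) ℂ)
    (hR : R = !![-1, 2 * c; 0, 1])
    (hT : T = !![1, 0; 2 * c, -1])
    (B : Matrix (Fin 2) (Fin 2) ℂ)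
    (hBR : R.transpose * B * R = B) (hBT : T.transpose * B * T = B) :
    ∃ z : ℂ, B = z • !![1, -c; -c, 1] := by
  have hm0 : (0:ℝ) < m := by positivity
  have hcos : (0:ℝ) < Real.cos ((k : ℝ) * Real.pi / (m : ℝ)) := by
    apply Real.cos_pos_of_mem_Ioo
    constructor
    · have : (0:ℝ) ≤ (k : ℝ) * Real.pi / (m : ℝ) := by positivity
      linarith [Real.pi_pos]
    · rw [div_lt_iff₀ hm0]
      have h2k : (2 * (k:ℝ)) < m := by exact_mod_cast hk2
      have := Real.pi_pos
      nlinarith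
  have hc0 : c ≠ 0 := by
    rw [hc]
    exact_mod_cast ne_of_gt hcos
  subst hR hT
  rw [show (!![-1, 2 * c; 0, 1]).transpose = !![-1, 0; 2 * c, 1] by
    ext i j; fin_cases i <;> fin_cases j <;> simp] at hBR
  rw [show (!![1, 0; 2 * c, -1]).transpose = !![1, 2 * c; 0, -1] by
    ext i j; fin_cases i <;> fin_cases j <;> simp] at hBT
  rw [Matrix.eta_fin_two B] at hBR hBT
  simp only [Matrix.mul_fin_two] at hBR hBT
  have h01 := congrFun (congrFun hBR 0) 1
  have h10 := congrFun (congrFun hBR 1) 0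
  have t01 := congrFun (congrFun hBT 0) 1
  have t10 := congrFun (congrFun hBT 1) 0
  simp only [Matrix.of_apply, Matrix.cons_val', Matrix.cons_val_zero, Matrix.cons_val_one, Matrix.head_cons, Matrix.empty_val', Matrix.cons_val_fin_one, Matrix.head_fin_const] at h01 h10 t01 t10
  have had : B 0 0 = B 1 1 := by
    have : c * B 0 0 = c * B 1 1 := by linear_combination -h01 / 2 + t01 / 2
    exact mul_left_cancel₀ hc0 this
  have hb : B 0 1 = -(c * B 0 0) := by linear_combination -h01 / 2
  have he : B 1 0 = -(c * B 0 0) := by linear_combination -h10 / 2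
  refine ⟨B 0 0, ?_⟩
  ext i j
  fin_cases i <;> fin_cases j <;>
    simp [had, hb, he] <;> ring
end

section
/- For x, y ∈ ℂ, let ϱ_{x,y} be the representation of the infinite dihedral group D_∞ = ⟨r, t | r² = t² = e⟩ on ℂβ_r ⊕ ℂβ_t given by r·β_r = −β_r, r·β_t = β_t + xβ_r, t·β_t = −β_t, t·β_r = β_r + yβ_t. Then for x, y, x′, y′ ∈ ℂ^×, the representations ϱ_{x,y} and ϱ_{x′,y′} are isomorphic if and only if xy = x′y′. -/
/-- For `x, y, x', y' ∈ ℂ^×`, the `D_∞`-representations `ϱ_{x,y}` and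
`ϱ_{x',y'}` (given on generators by the matrices below) are isomorphic
(intertwined by an invertible matrix) if and only if `x y = x' y'`. -/
theorem stmt8 (x y x' y' : ℂ) (hx : x ≠ 0) (hy : y ≠ 0) (hx' : x' ≠ 0) (hy' : y' ≠ 0) :
    (∃ P : Matrix (Fin 2) (Fin 2) ℂ, IsUnit P ∧
      P * !![-1, x; 0, 1] = !![-1, x'; 0, 1] * P ∧
      P * !![1, 0; y, -1] = !![1, 0; y', -1] * P) ↔ x * y = x' * y' := by
  constructor
  · rintro ⟨P, hP, h1, h2⟩
    set a := P 0 0 with ha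
    set b := P 0 1 with hb
    set c := P 1 0 with hc
    set d := P 1 1 with hd
    have e100 := congrFun (congrFun h1 0) 0
    have e101 := congrFun (congrFun h1 0) 1
    have e210 := congrFun (congrFun h2 1) 0
    have e211 := congrFun (congrFun h2 1) 1
    have e201 := congrFun (congrFun h2 0) 1
    simp [Matrix.mul_apply, Fin.sum_univ_two, ← ha, ← hb, ← hc, ← hd] at e100 e101 e210 e211 e201
    have hc0 : c = 0 := e100.resolve_left hx'
    have hb0 : b = 0 := e211.resolve_left hy'
    have hdet : a * d - b * c ≠ 0 := by
      have := (Matrix.isUnit_iff_isUnit_det P).mp hP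
      rw [isUnit_iff_ne_zero] at this
      rwa [Matrix.det_fin_two, ← ha, ← hb, ← hc, ← hd] at this
    rw [hb0, hc0] at hdet
    simp at hdet
    have ha0 : a ≠ 0 := hdet.1
    have hd0 : d ≠ 0 := hdet.2
    -- e101 : a*x + b = -b + x'*d ; with b = 0 : a*x = x'*d
    have k1 : a * x = x' * d := by rw [hb0] at e101; linear_combination e101
    have k2 : d * y = y' * a := by rw [hc0] at e210; linear_combination e210
    have key : x * y * (a * d) = x' * y' * (a * d) := by
      have : (a * x) * (d * y) = (x' * d) * (y' * a) := by rw [k1, k2]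
      linear_combination this
    exact mul_right_cancel₀ (mul_ne_zero ha0 hd0) key
  · intro h
    refine ⟨!![1, 0; 0, x / x'], ?_, ?_, ?_⟩
    · rw [Matrix.isUnit_iff_isUnit_det, Matrix.det_fin_two_of, isUnit_iff_ne_zero]
      simpa using div_ne_zero hx hx'
    · ext i j
      fin_cases i <;> fin_cases j <;>
        simp [Matrix.mul_apply, Fin.sum_univ_two] <;> field_simp
    · ext i j
      fin_cases i <;> fin_cases j <;>
        simp [Matrix.mul_apply, Fin.sum_univ_two] <;> field_simp <;>
        linear_combination h
end

section
/- For x, y ∈ ℂ^×, the representation ϱ_{x,y} of D_∞ on ℂ² (given by r ↦ [[-1,x],[0,1]], t ↦ [[1,0],[y,-1]]) is irreducible if and only if xy ≠ 4. -/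
open Matrix

private lemma two_eq {v w : Fin 2 → ℂ} (h0 : v 0 = w 0) (h1 : v 1 = w 1) : v = w := by
  funext i; fin_cases i <;> assumption

private lemma mulVec_pair (M : Matrix (Fin 2) (Fin 2) ℂ) (v : Fin 2 → ℂ) :
    M.mulVec v = ![M 0 0 * v 0 + M 0 1 * v 1, M 1 0 * v 0 + M 1 1 * v 1] := by
  apply two_eq <;>
    simp [Matrix.mulVec, dotProduct, Fin.sum_univ_two]

/-- For `x, y ∈ ℂ^×`, the `D_∞`-representation `ϱ_{x,y}` is irreducible if and
only if `x y ≠ 4`. -/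
theorem stmt9 (x y : ℂ) (hx : x ≠ 0) (hy : y ≠ 0) :
    (∀ U : Submodule ℂ (Fin 2 → ℂ),
      (∀ v ∈ U, (!![-1, x; 0, 1] : Matrix (Fin 2) (Fin 2) ℂ).mulVec v ∈ U) →
      (∀ v ∈ U, (!![1, 0; y, -1] : Matrix (Fin 2) (Fin 2) ℂ).mulVec v ∈ U) →
      U = ⊥ ∨ U = ⊤) ↔ x * y ≠ 4 := by
  constructor
  · intro h hxy
    have hRinv : ∀ v ∈ Submodule.span ℂ {![x, (2:ℂ)]},
        (!![-1, x; 0, 1] : Matrix (Fin 2) (Fin 2) ℂ).mulVec v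
          ∈ Submodule.span ℂ {![x, (2:ℂ)]} := by
      intro v hv
      rw [Submodule.mem_span_singleton] at hv
      obtain ⟨c, rfl⟩ := hv
      rw [Matrix.mulVec_smul]
      refine Submodule.smul_mem _ _ ?_
      rw [mulVec_pair]
      have he : (![!![-1,x;0,1] 0 0 * ![x,(2:ℂ)] 0 + !![-1,x;0,1] 0 1 * ![x,(2:ℂ)] 1,
          !![-1,x;0,1] 1 0 * ![x,(2:ℂ)] 0 + !![-1,x;0,1] 1 1 * ![x,(2:ℂ)] 1])
          = ![x, (2:ℂ)] := by
        apply two_eq <;> simp <;> ring_nf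
      rw [he]
      exact Submodule.mem_span_singleton_self _
    have hTinv : ∀ v ∈ Submodule.span ℂ {![x, (2:ℂ)]},
        (!![1, 0; y, -1] : Matrix (Fin 2) (Fin 2) ℂ).mulVec v
          ∈ Submodule.span ℂ {![x, (2:ℂ)]} := by
      intro v hv
      rw [Submodule.mem_span_singleton] at hv
      obtain ⟨c, rfl⟩ := hv
      rw [Matrix.mulVec_smul]
      refine Submodule.smul_mem _ _ ?_
      rw [mulVec_pair]
      have he : (![!![1,0;y,-1] 0 0 * ![x,(2:ℂ)] 0 + !![1,0;y,-1] 0 1 * ![x,(2:ℂ)] 1,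
          !![1,0;y,-1] 1 0 * ![x,(2:ℂ)] 0 + !![1,0;y,-1] 1 1 * ![x,(2:ℂ)] 1])
          = ![x, (2:ℂ)] := by
        apply two_eq <;> simp
        linear_combination hxy
      rw [he]
      exact Submodule.mem_span_singleton_self _
    rcases h (Submodule.span ℂ {![x, (2:ℂ)]}) hRinv hTinv with hU | hU
    · have h2 : (![x, (2:ℂ)]) ∈ Submodule.span ℂ {![x, (2:ℂ)]} :=
        Submodule.mem_span_singleton_self _
      rw [hU, Submodule.mem_bot] at h2
      have := congrFun h2 1
      simp at this
    · have h1 : (![(1:ℂ), 0]) ∈ Submodule.span ℂ {![x, (2:ℂ)]} := by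
        rw [hU]; trivial
      rw [Submodule.mem_span_singleton] at h1
      obtain ⟨c, hc⟩ := h1
      have e1 := congrFun hc 1
      have e0 := congrFun hc 0
      simp at e1 e0
      rw [e1, zero_mul] at e0
      exact zero_ne_one e0
  · intro hxy U hR hT
    by_cases hbot : U = ⊥
    · exact Or.inl hbot
    right
    obtain ⟨v, hvU, hv0⟩ := (Submodule.ne_bot_iff U).mp hbot
    have key : (![(1:ℂ),0]) ∈ U ∧ (![(0:ℂ),1]) ∈ U := by
      by_cases hb : v 1 = 0
      · have ha : v 0 ≠ 0 := by
          intro ha; exact hv0 (two_eq (by simpa using ha) (by simpa using hb))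
        have h10 : (![(1:ℂ),0]) ∈ U := by
          have hm := Submodule.smul_mem U (v 0)⁻¹ hvU
          convert hm using 1
          apply two_eq <;> simp [hb] <;> field_simp
        have hTv := hT _ h10
        rw [mulVec_pair] at hTv
        have h0y : (![(0:ℂ), y]) ∈ U := by
          have hm := Submodule.sub_mem U hTv h10
          convert hm using 1
          apply two_eq <;> simp
        have h01 : (![(0:ℂ),1]) ∈ U := by
          have hm := Submodule.smul_mem U y⁻¹ h0y
          convert hm using 1
          apply two_eq <;> simp <;> field_simp
        exact ⟨h10, h01⟩
      · have hRv := hR v hvU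
        rw [mulVec_pair] at hRv
        have hsum := Submodule.add_mem U hRv hvU
        have hw : (![x, (2:ℂ)]) ∈ U := by
          have hm := Submodule.smul_mem U (v 1)⁻¹ hsum
          convert hm using 1
          apply two_eq
          · show x = (v 1)⁻¹ * ((-1 * v 0 + x * v 1) + v 0)
            field_simp <;> ring
          · show (2:ℂ) = (v 1)⁻¹ * ((0 * v 0 + 1 * v 1) + v 1)
            field_simp <;> ring
        have hTw := hT _ hw
        rw [mulVec_pair] at hTw
        have hdiff := Submodule.sub_mem U hTw hw
        have hne : y * x - 4 ≠ 0 := by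
          intro hz; exact hxy (by linear_combination hz)
        have h01 : (![(0:ℂ),1]) ∈ U := by
          have hm := Submodule.smul_mem U (y*x-4)⁻¹ hdiff
          convert hm using 1
          apply two_eq
          · show (0:ℂ) = (y*x-4)⁻¹ * ((1 * x + 0 * 2) - x)
            field_simp
            ring
          · show (1:ℂ) = (y*x-4)⁻¹ * ((y * x + (-1) * 2) - 2)
            field_simp <;> ring
        have h10 : (![(1:ℂ),0]) ∈ U := by
          have hsub := Submodule.sub_mem U hw (Submodule.smul_mem U 2 h01)
          have hm := Submodule.smul_mem U x⁻¹ hsub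
          convert hm using 1
          apply two_eq
          · show (1:ℂ) = x⁻¹ * (x - 2 * 0)
            field_simp
            ring
          · show (0:ℂ) = x⁻¹ * (2 - 2 * 1)
            simp
        exact ⟨h10, h01⟩
    rw [eq_top_iff]
    intro u _
    have hu : u = u 0 • ![(1:ℂ),0] + u 1 • ![(0:ℂ),1] := by
      apply two_eq <;> simp
    rw [hu]
    exact Submodule.add_mem U (Submodule.smul_mem U _ key.1)
      (Submodule.smul_mem U _ key.2)
end

section
/- Every indecomposable 2-dimensional representation ϱ of D_∞ in which ϱ(r) ≠ ±id and ϱ(t) ≠ ±id, and in which the (−1)-eigenvectors of ϱ(r) and ϱ(t) are linearly independent, is isomorphic to ϱ_{x,y} for some x, y ∈ ℂ, where ϱ_{x,y}(r) = [[-1,x],[0,1]] and ϱ_{x,y}(t) = [[1,0],[y,-1]] in the basis of (−1)-eigenvectors. -/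
lemma trace_eq_zero_of_sq (A : Matrix (Fin 2) (Fin 2) ℂ) (h2 : A ^ 2 = 1)
    (h1 : A ≠ 1) (h1' : A ≠ -1) : A 0 0 + A 1 1 = 0 := by
  by_contra ht
  have h2' : A * A = 1 := by rw [← pow_two]; exact h2
  have e00 := congrFun (congrFun h2' 0) 0
  have e01 := congrFun (congrFun h2' 0) 1
  have e10 := congrFun (congrFun h2' 1) 0
  have e11 := congrFun (congrFun h2' 1) 1
  simp [Matrix.mul_apply, Fin.sum_univ_two, Matrix.one_apply] at e00 e01 e10 e11
  have hb : A 0 1 = 0 := by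
    have : A 0 1 * (A 0 0 + A 1 1) = 0 := by linear_combination e01
    exact (mul_eq_zero.1 this).resolve_right ht
  have hc : A 1 0 = 0 := by
    have : A 1 0 * (A 0 0 + A 1 1) = 0 := by linear_combination e10
    exact (mul_eq_zero.1 this).resolve_right ht
  rw [hb] at e00
  rw [hc] at e11
  simp at e00 e11
  have had : A 0 0 = A 1 1 := by
    have h := (mul_eq_zero.1 (show (A 0 0 - A 1 1) * (A 0 0 + A 1 1) = 0 by
      linear_combination e00 - e11)).resolve_right ht
    linear_combination h
  rcases mul_self_eq_one_iff.1 e00 with h | h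
  · exact h1 (by ext i j; fin_cases i <;> fin_cases j <;>
      simp [Matrix.one_apply, hb, hc, h, ← had])
  · exact h1' (by ext i j; fin_cases i <;> fin_cases j <;>
      simp [Matrix.one_apply, hb, hc, h, ← had])

/-- Every indecomposable 2-dimensional representation of `D_∞` (given by two
involutions `A`, `B`), with `A ≠ ±1`, `B ≠ ±1`, whose `(-1)`-eigenvectors of
`A` and `B` are linearly independent, is isomorphic to `ϱ_{x,y}` for some
`x, y ∈ ℂ`. -/
theorem stmt10 (A B : Matrix (Fin 2) (Fin 2) ℂ)
    (hA2 : A ^ 2 = 1) (hB2 : B ^ 2 = 1)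
    (hA1 : A ≠ 1) (hA1' : A ≠ -1) (hB1 : B ≠ 1) (hB1' : B ≠ -1)
    (hindec : ¬ ∃ U U' : Submodule ℂ (Fin 2 → ℂ), U ≠ ⊥ ∧ U' ≠ ⊥ ∧ IsCompl U U' ∧
      (∀ v ∈ U, A.mulVec v ∈ U) ∧ (∀ v ∈ U, B.mulVec v ∈ U) ∧
      (∀ v ∈ U', A.mulVec v ∈ U') ∧ (∀ v ∈ U', B.mulVec v ∈ U'))
    (u v : Fin 2 → ℂ) (hu0 : u ≠ 0) (hv0 : v ≠ 0)
    (hu : A.mulVec u = -u) (hv : B.mulVec v = -v)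
    (hind : LinearIndependent ℂ ![u, v]) :
    ∃ x y : ℂ, ∃ P : Matrix (Fin 2) (Fin 2) ℂ, IsUnit P ∧
      P * A = !![-1, x; 0, 1] * P ∧ P * B = !![1, 0; y, -1] * P := by
  have htA := trace_eq_zero_of_sq A hA2 hA1 hA1'
  have htB := trace_eq_zero_of_sq B hB2 hB1 hB1'
  set Q : Matrix (Fin 2) (Fin 2) ℂ := Matrix.transpose (Matrix.of ![u, v]) with hQdef
  have hUnit : IsUnit Q := by
    rw [← Matrix.linearIndependent_cols_iff_isUnit]
    exact hind
  have hdet : IsUnit Q.det := (Matrix.isUnit_iff_isUnit_det Q).1 hUnit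
  set P := Q⁻¹ with hPdef
  have hPQ : P * Q = 1 := Matrix.nonsing_inv_mul Q hdet
  have hQP : Q * P = 1 := Matrix.mul_nonsing_inv Q hdet
  have hPUnit : IsUnit P := Matrix.isUnit_nonsing_inv_iff.2 hUnit
  have hli := Fintype.linearIndependent_iff.1 hind
  set M := P * A * Q with hMdef
  set N := P * B * Q with hNdef
  have hQM : Q * M = A * Q := by
    rw [hMdef, ← Matrix.mul_assoc, ← Matrix.mul_assoc, hQP, Matrix.one_mul]
  have hQN : Q * N = B * Q := by
    rw [hNdef, ← Matrix.mul_assoc, ← Matrix.mul_assoc, hQP, Matrix.one_mul]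
  have hQ0 : ∀ i, Q i 0 = u i := fun i => rfl
  have hQ1 : ∀ i, Q i 1 = v i := fun i => rfl
  -- column 0 of M
  have hcolA : ∀ i, (M 0 0 + 1) * u i + M 1 0 * v i = 0 := by
    intro i
    have h1 := congrFun (congrFun hQM i) 0
    have h2 : A.mulVec u i = -u i := congrFun hu i
    simp only [Matrix.mul_apply, Fin.sum_univ_two, hQ0, hQ1, Matrix.mulVec,
      dotProduct, Pi.neg_apply] at h1 h2
    linear_combination h1 + h2
  have hAz := hli ![M 0 0 + 1, M 1 0] (by
    funext i
    simpa [Fin.sum_univ_two] using hcolA i)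
  have hM00 : M 0 0 = -1 := by have := hAz 0; simp at this; linear_combination this
  have hM10 : M 1 0 = 0 := by simpa using hAz 1
  -- column 1 of N
  have hcolB : ∀ i, N 0 1 * u i + (N 1 1 + 1) * v i = 0 := by
    intro i
    have h1 := congrFun (congrFun hQN i) 1
    have h2 : B.mulVec v i = -v i := congrFun hv i
    simp only [Matrix.mul_apply, Fin.sum_univ_two, hQ0, hQ1, Matrix.mulVec,
      dotProduct, Pi.neg_apply] at h1 h2
    linear_combination h1 + h2
  have hBz := hli ![N 0 1, N 1 1 + 1] (by
    funext i
    simpa [Fin.sum_univ_two] using hcolB i)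
  have hN01 : N 0 1 = 0 := by simpa using hBz 0
  have hN11 : N 1 1 = -1 := by have := hBz 1; simp at this; linear_combination this
  -- traces
  have htM : M 0 0 + M 1 1 = 0 := by
    have : M.trace = A.trace := by
      rw [hMdef, Matrix.trace_mul_comm, ← Matrix.mul_assoc, hQP, Matrix.one_mul]
    simp only [Matrix.trace, Matrix.diag, Fin.sum_univ_two] at this
    rw [this]; exact htA
  have htN : N 0 0 + N 1 1 = 0 := by
    have : N.trace = B.trace := by
      rw [hNdef, Matrix.trace_mul_comm, ← Matrix.mul_assoc, hQP, Matrix.one_mul]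
    simp only [Matrix.trace, Matrix.diag, Fin.sum_univ_two] at this
    rw [this]; exact htB
  have hM11 : M 1 1 = 1 := by linear_combination htM - hM00
  have hN00 : N 0 0 = 1 := by linear_combination htN - hN11
  refine ⟨M 0 1, N 1 0, P, hPUnit, ?_, ?_⟩
  · have hM : M = !![-1, M 0 1; 0, 1] := by
      ext i j; fin_cases i <;> fin_cases j <;> simp [hM00, hM10, hM11]
    calc P * A = P * A * (Q * P) := by rw [hQP, Matrix.mul_one]
    _ = M * P := by rw [hMdef]; noncomm_ring
    _ = !![-1, M 0 1; 0, 1] * P := by rw [← hM]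
  · have hN : N = !![1, 0; N 1 0, -1] := by
      ext i j; fin_cases i <;> fin_cases j <;> simp [hN00, hN01, hN11]
    calc P * B = P * B * (Q * P) := by rw [hQP, Matrix.mul_one]
    _ = N * P := by rw [hNdef]; noncomm_ring
    _ = !![1, 0; N 1 0, -1] * P := by rw [← hN]
end

section
/- Let W be the Coxeter group of type Ã_n (affine symmetric group) with generators s₀,…,s_n, and for x ∈ ℂ^× let V_x be the representation on ℂ^{n+1} with basis α₀,…,α_n where s_i·α_i = −α_i, s_i·α_{i±1} = α_{i±1} + α_i (indices mod n+1), except s₀·α_n = α_n + x α₀ and s_n·α₀ = α₀ + x^{−1} α_n, and s_i·α_j = α_j when |i−j| mod (n+1) ≥ 2. Then the (n+1)×(n+1) matrix A with diagonal entries 1, entries −1/2 at positions (i, i±1 mod n+1) except A₀ₙ = −x/2 and Aₙ₀ = −1/(2x), and 0 elsewhere, has determinant (2 − x − x^{−1})/2^{n+1}. -/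
open Matrix

/-- The cyclic shift matrix of size `n+1`. -/
def shiftM (n : ℕ) : Matrix (Fin (n+1)) (Fin (n+1)) ℂ :=
  Matrix.of fun i j => if j = i + 1 then 1 else 0

/-- The circulant matrix conjugate to the matrix `A` in the theorem. -/
noncomputable def circM (n : ℕ) (y : ℂ) : Matrix (Fin (n+1)) (Fin (n+1)) ℂ :=
  Matrix.of fun i j =>
    if i = j then 1 else if j = i + 1 then -(y/2) else if i = j + 1 then -(1/(2*y)) else 0

lemma shiftM_eq_perm (n : ℕ) : shiftM n = (finRotate (n+1)).permMatrix ℂ := by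
  ext i j
  simp [shiftM, Equiv.Perm.permMatrix, PEquiv.toMatrix_apply, Equiv.toPEquiv_apply,
    finRotate_succ_apply, eq_comm]

lemma det_shiftM (n : ℕ) : (shiftM n).det = (-1)^n := by
  rw [shiftM_eq_perm, Matrix.det_permutation, sign_finRotate]
  push_cast
  norm_num

lemma det_shift_sub (n : ℕ) (c : ℂ) :
    (shiftM n - c • 1).det = (-1)^(n+1) * (c^(n+1) - 1) := by
  set M : Matrix (Fin (n+1)) (Fin (n+1)) ℂ := shiftM n - c • 1 with hM
  set U : Matrix (Fin (n+1)) (Fin (n+1)) ℂ :=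
    Matrix.of (fun k j => if j = 0 then c ^ (k : ℕ) else if k = j then 1 else 0) with hU
  have hUdet : U.det = 1 := by
    rw [Matrix.det_of_lowerTriangular U ?_]
    · apply Finset.prod_eq_one
      intro i _
      by_cases h : i = (0 : Fin (n+1)) <;> simp [hU, h]
    · intro i j hij
      have h1 : j ≠ 0 := by
        rintro rfl
        rw [OrderDual.toDual_lt_toDual] at hij
        exact (Fin.zero_le i : (0 : Fin (n+1)) ≤ i).not_gt hij
      have h2 : i ≠ j := ne_of_lt hij
      simp [hU, h1, h2]
  have hMU : M * U = Matrix.of (fun i j =>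
      if j = 0 then (if i = Fin.last n then 1 - c^(n+1) else 0) else M i j) := by
    ext i j
    rw [Matrix.mul_apply]
    by_cases hj : j = 0
    · subst hj
      simp only [hU, Matrix.of_apply, if_pos rfl]
      simp only [hM, Matrix.sub_apply, Matrix.smul_apply, Matrix.one_apply, shiftM,
        Matrix.of_apply, smul_eq_mul, sub_mul, mul_ite, ite_mul, one_mul, zero_mul, mul_zero,
        if_true, mul_one]
      rw [Finset.sum_sub_distrib, Finset.sum_ite_eq' Finset.univ (i+1),
        Finset.sum_ite_eq Finset.univ i]
      simp only [Finset.mem_univ, if_pos]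
      by_cases hi : i = Fin.last n
      · subst hi
        rw [Fin.last_add_one]
        simp [pow_succ, mul_comm]
      · rw [if_neg hi, Fin.val_add_one_of_lt (Fin.lt_last_iff_ne_last.mpr hi)]
        rw [pow_succ]
        ring
    · rw [Finset.sum_eq_single j]
      · simp [hU, hj]
      · intro k _ hk
        simp [hU, hj, hk]
      · simp
  have hdet : M.det = M.det * U.det := by rw [hUdet, mul_one]
  rw [← Matrix.det_mul] at hdet
  rw [hdet, hMU, Matrix.det_succ_column_zero]
  rw [Finset.sum_eq_single (Fin.last n)]
  · have hW : ((Matrix.of (fun i j =>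
        if j = 0 then (if i = Fin.last n then 1 - c^(n+1) else 0)
        else M i j)).submatrix (Fin.last n).succAbove Fin.succ).det = 1 := by
      rw [Matrix.det_of_lowerTriangular _ ?_]
      · apply Finset.prod_eq_one
        intro i _
        simp only [Matrix.submatrix_apply, Fin.succAbove_last, Matrix.of_apply,
          if_neg (Fin.succ_ne_zero i), hM, Matrix.sub_apply, Matrix.smul_apply,
          Matrix.one_apply, shiftM, smul_eq_mul]
        rw [if_pos Fin.coeSucc_eq_succ.symm, if_neg (Fin.castSucc_lt_succ : i.castSucc < i.succ).ne]
        simp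
      · intro i j hij
        rw [OrderDual.toDual_lt_toDual] at hij
        simp only [Matrix.submatrix_apply, Fin.succAbove_last, Matrix.of_apply,
          if_neg (Fin.succ_ne_zero j), hM, Matrix.sub_apply, Matrix.smul_apply,
          Matrix.one_apply, shiftM, smul_eq_mul]
        have h1 : ¬ (j.succ = i.castSucc + 1) := by
          rw [Fin.coeSucc_eq_succ]
          intro h
          exact (ne_of_lt hij) (Fin.succ_injective _ h).symm
        have h2 : ¬ (i.castSucc = j.succ) := by
          intro h
          have := congrArg Fin.val h
          simp [Fin.val_succ] at this
          omega
        simp [h1, h2, hij.ne, hij.ne']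
    rw [hW]
    simp only [Matrix.of_apply, if_true, Fin.val_last, mul_one]
    norm_num [pow_succ]
    ring
  · intro i _ hi
    simp [hi]
  · simp

lemma shift_mul_circ (n : ℕ) (hn : 2 ≤ n) (y : ℂ) :
    shiftM n * circM n y =
      (-(y/2)) • (shiftM n * shiftM n) + shiftM n
        + (-(1/(2*y))) • (1 : Matrix (Fin (n+1)) (Fin (n+1)) ℂ) := by
  have hv1 : ((1:Fin (n+1)) : ℕ) = 1 := by
    rw [Fin.val_one', Nat.mod_eq_of_lt (by omega)]
  have h1 : (1 : Fin (n+1)) ≠ 0 := by intro h; rw [h] at hv1; simp at hv1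
  have h2 : (1 : Fin (n+1)) + 1 ≠ 0 := by
    have hv2 : (((1:Fin (n+1)) + 1 : Fin (n+1)) : ℕ) = 2 := by
      rw [Fin.val_add, hv1, Nat.mod_eq_of_lt (by omega)]
    intro h; rw [h] at hv2; simp at hv2
  ext i j
  have hS : ∀ X : Matrix (Fin (n+1)) (Fin (n+1)) ℂ, (shiftM n * X) i j = X (i + 1) j := by
    intro X
    rw [Matrix.mul_apply, Finset.sum_eq_single (i+1)]
    · simp [shiftM]
    · intro k _ hk; simp [shiftM, hk]
    · simp
  simp only [Matrix.add_apply, Matrix.smul_apply, Matrix.one_apply, smul_eq_mul, hS]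
  have hSS : shiftM n (i + 1) j = if j = i + 1 + 1 then 1 else 0 := rfl
  rw [hSS]
  simp only [circM, Matrix.of_apply]
  have q1 : i + 1 ≠ i + 1 + 1 := fun h => h1 (left_eq_add.mp h)
  have q2 : i ≠ i + 1 := fun h => h1 (left_eq_add.mp h)
  have q3 : i ≠ i + 1 + 1 := fun h => h2 (left_eq_add.mp (h.trans (add_assoc i 1 1)))
  have q4 : i + 1 ≠ i + 1 + 1 + 1 := fun h => h2 (left_eq_add.mp (h.trans (add_assoc (i+1) 1 1)))
  simp only [shiftM, Matrix.of_apply]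
  by_cases e1 : j = i + 1
  · subst e1
    simp only [if_pos rfl, if_neg q1, if_neg q2, if_neg (Ne.symm q2)]
    norm_num
  · by_cases e2 : j = i + 1 + 1
    · subst e2
      simp only [if_pos rfl, if_neg q1, if_neg q3, if_neg (Ne.symm q3), if_neg q4]
      norm_num
      omega
    · by_cases e3 : i = j
      · subst e3
        simp only [if_pos rfl, if_neg (Ne.symm q2), if_neg e2, if_neg e1]
        norm_num
      · simp only [if_neg (fun h : i + 1 = j => e1 h.symm), if_neg e2,
          if_neg (fun h : i + 1 = j + 1 => e3 (add_right_cancel h)),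
          if_neg e1, if_neg e3]
        norm_num

/-- The determinant of the `(n+1) × (n+1)` matrix `A` controlling the
reducibility of the generalized geometric representation of affine type `Ã_n`
with parameter `x` equals `(2 - x - x⁻¹)/2^(n+1)`. -/
theorem stmt12 (n : ℕ) (hn : 2 ≤ n) (x : ℂ) (hx : x ≠ 0)
    (A : Matrix (Fin (n + 1)) (Fin (n + 1)) ℂ)
    (hA : ∀ i j : Fin (n + 1), A i j =
      if i = j then 1
      else if i = 0 ∧ j = Fin.last n then -x / 2
      else if i = Fin.last n ∧ j = 0 then -1 / (2 * x)
      else if (j : ℕ) = (i : ℕ) + 1 ∨ (i : ℕ) = (j : ℕ) + 1 then -1 / 2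
      else 0) :
    A.det = (2 - x - x⁻¹) / 2 ^ (n + 1) := by
  obtain ⟨y, hy⟩ := IsAlgClosed.exists_pow_nat_eq (x⁻¹) (n := n + 1) (by omega)
  have hy0 : y ≠ 0 := by
    intro h
    rw [h, zero_pow (by omega)] at hy
    exact hx (by simpa using hy.symm)
  -- characterization of `j = i + 1` in `Fin (n+1)`
  have hsucc : ∀ i j : Fin (n+1), j = i + 1 ↔
      ((j : ℕ) = (i : ℕ) + 1 ∨ (i = Fin.last n ∧ j = 0)) := by
    intro i j
    constructor
    · rintro rfl
      by_cases h : i = Fin.last n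
      · exact Or.inr ⟨h, by rw [h, Fin.last_add_one]⟩
      · exact Or.inl (Fin.val_add_one_of_lt (Fin.lt_last_iff_ne_last.mpr h))
    · rintro (h | ⟨rfl, rfl⟩)
      · have hi : i ≠ Fin.last n := by
          intro hl
          have := j.isLt
          rw [hl] at h
          simp [Fin.val_last] at h
          omega
        apply Fin.ext
        rw [Fin.val_add_one_of_lt (Fin.lt_last_iff_ne_last.mpr hi), h]
      · rw [Fin.last_add_one]
  -- A is conjugate to circM by the diagonal matrix of powers of y
  have key : ∀ i j : Fin (n+1), A i j = y^(i:ℕ) * (circM n y i j * (y^(j:ℕ))⁻¹) := by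
    intro i j
    rw [hA]
    simp only [circM, Matrix.of_apply]
    have hlast0 : Fin.last n ≠ 0 := by
      intro h
      have := congrArg Fin.val h
      simp [Fin.val_last] at this
      omega
    by_cases e0 : i = j
    · subst e0
      rw [if_pos rfl, if_pos rfl]
      field_simp
    rw [if_neg e0, if_neg e0]
    by_cases c1 : i = 0 ∧ j = Fin.last n
    · obtain ⟨rfl, rfl⟩ := c1
      rw [if_pos ⟨rfl, rfl⟩]
      have hc2 : ¬ (Fin.last n = 0 + 1) := by
        rw [hsucc]
        push_neg
        constructor
        · simp [Fin.val_last]; omega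
        · intro h; exact absurd h.symm hlast0
      rw [if_neg hc2, if_pos (by rw [Fin.last_add_one]), Fin.val_zero, Fin.val_last, pow_zero]
      have hx2 : x = (y^(n+1))⁻¹ := by rw [hy, inv_inv]
      rw [hx2, pow_succ]
      field_simp
    rw [if_neg c1]
    by_cases c2 : i = Fin.last n ∧ j = 0
    · obtain ⟨rfl, rfl⟩ := c2
      rw [if_pos ⟨rfl, rfl⟩, if_pos (by rw [Fin.last_add_one]), Fin.val_zero, Fin.val_last,
        pow_zero, inv_one, mul_one]
      have : y^n * -(y/2) = -(y^(n+1)/2) := by rw [pow_succ]; ring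
      rw [this, hy]
      field_simp
    rw [if_neg c2]
    by_cases c3 : (j : ℕ) = (i : ℕ) + 1 ∨ (i : ℕ) = (j : ℕ) + 1
    · rw [if_pos c3]
      rcases c3 with h | h
      · have hj : j = i + 1 := (hsucc i j).mpr (Or.inl h)
        rw [if_pos hj]
        have hij : ¬ (i = j + 1) := by
          intro hc
          rw [hsucc] at hc
          rcases hc with hc | ⟨rfl, rfl⟩
          · omega
          · exact c1 ⟨rfl, rfl⟩
        rw [h, pow_succ]
        field_simp [pow_ne_zero (i:ℕ) hy0]
      · have hij : i = j + 1 := (hsucc j i).mpr (Or.inl h)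
        have hj : ¬ (j = i + 1) := by
          intro hc
          rw [hsucc] at hc
          rcases hc with hc | ⟨rfl, rfl⟩
          · omega
          · exact c2 ⟨rfl, rfl⟩
        rw [if_neg hj, if_pos hij, h, pow_succ]
        field_simp [pow_ne_zero (j:ℕ) hy0]
    · rw [if_neg c3]
      have hj : ¬ (j = i + 1) := by
        intro hc
        rw [hsucc] at hc
        rcases hc with hc | ⟨rfl, rfl⟩
        · exact c3 (Or.inl hc)
        · exact c2 ⟨rfl, rfl⟩
      have hij : ¬ (i = j + 1) := by
        intro hc
        rw [hsucc] at hc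
        rcases hc with hc | ⟨rfl, rfl⟩
        · exact c3 (Or.inr hc)
        · exact c1 ⟨rfl, rfl⟩
      rw [if_neg hj, if_neg hij]
      ring
  have hAeq : A = Matrix.diagonal (fun i : Fin (n+1) => y^(i:ℕ)) * circM n y *
      Matrix.diagonal (fun i : Fin (n+1) => (y^(i:ℕ))⁻¹) := by
    ext i j
    rw [Matrix.mul_apply]
    rw [Finset.sum_eq_single j]
    · rw [Matrix.diagonal_mul, Matrix.diagonal_apply_eq]
      rw [key i j]
      ring
    · intro k _ hk
      rw [Matrix.diagonal_apply_ne _ hk, mul_zero]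
    · simp
  -- hence det A = det circM
  have hdetA : A.det = (circM n y).det := by
    rw [hAeq, Matrix.det_mul, Matrix.det_mul, Matrix.det_diagonal, Matrix.det_diagonal]
    rw [mul_comm, ← mul_assoc, ← Finset.prod_mul_distrib]
    rw [Finset.prod_congr rfl (fun i _ => inv_mul_cancel₀ (pow_ne_zero _ hy0))]
    simp
  -- determinant of circM via the factorization
  have hfact : shiftM n * circM n y =
      (-(y/2)) • ((shiftM n - y⁻¹ • 1) * (shiftM n - y⁻¹ • 1)) := by
    have expand : (shiftM n - y⁻¹ • 1) * (shiftM n - y⁻¹ • 1)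
        = shiftM n * shiftM n - (y⁻¹ • shiftM n + y⁻¹ • shiftM n) + (y⁻¹ * y⁻¹) • 1 := by
      simp only [sub_mul, mul_sub, smul_mul_assoc, mul_smul_comm, one_mul, mul_one, smul_smul,
        smul_sub, smul_add]
      abel
    rw [shift_mul_circ n hn y, expand]
    simp only [smul_add, smul_sub, smul_smul]
    have e1 : -(y/2) * y⁻¹ = -(1/2) := by field_simp
    have e2 : -(y/2) * (y⁻¹ * y⁻¹) = -(1/(2*y)) := by
      rw [← mul_assoc]
      field_simp
    rw [e1, e2]
    have e3 : (-(1/2):ℂ) • shiftM n + (-(1/2):ℂ) • shiftM n = (-1 : ℂ) • shiftM n := by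
      rw [← add_smul]; norm_num
    rw [e3, neg_one_smul, sub_neg_eq_add]
  have hdetS : (shiftM n).det = (-1)^n := det_shiftM n
  have hdetK : (shiftM n - y⁻¹ • 1).det = (-1)^(n+1) * ((y⁻¹)^(n+1) - 1) := det_shift_sub n y⁻¹
  have hdetprod : (-1)^n * (circM n y).det =
      (-(y/2))^(n+1) * ((-1)^(n+1) * ((y⁻¹)^(n+1) - 1))^2 := by
    have h := congrArg Matrix.det hfact
    rw [Matrix.det_mul, hdetS, Matrix.det_smul, Matrix.det_mul, hdetK, Fintype.card_fin] at h
    rw [h]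
    ring
  have hsign : ((-1:ℂ)^n) * ((-1:ℂ)^n) = 1 := by
    rw [← mul_pow]
    norm_num
  have hdetC : (circM n y).det =
      (-1)^n * ((-(y/2))^(n+1) * ((-1)^(n+1) * ((y⁻¹)^(n+1) - 1))^2) := by
    rw [← hdetprod, ← mul_assoc, hsign, one_mul]
  rw [hdetA, hdetC]
  have hyx : (y⁻¹)^(n+1) = x := by rw [inv_pow, hy, inv_inv]
  have hneg : (-(y/2))^(n+1) = (-1)^(n+1) * (y^(n+1) / 2^(n+1)) := by
    rw [neg_pow, div_pow]
  rw [hyx, hneg, hy]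
  rw [show ((-1:ℂ))^(n+1) = -((-1:ℂ))^n from by rw [pow_succ]; ring]
  have h2 : (2:ℂ)^(n+1) ≠ 0 := pow_ne_zero _ two_ne_zero
  have key2 : ∀ u : ℂ, u * u = 1 →
      u * (-u * (x⁻¹ / 2^(n+1)) * (-u * (x - 1))^2) = (2 - x - x⁻¹) / 2^(n+1) := by
    intro u hu
    have : u * (-u * (x⁻¹ / 2^(n+1)) * (-u * (x - 1))^2)
        = -((u * u) * ((u * u) * (x⁻¹ / 2^(n+1) * (x-1)^2))) := by ring
    rw [this, hu, one_mul, one_mul]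
    field_simp
    ring
  exact key2 ((-1:ℂ)^n) hsign
end

section
/- The generalized geometric representation of the Coxeter group W of type Ã_n associated with parameter x ∈ ℂ^× (as in the previous context) is irreducible if and only if x ≠ 1. Equivalently: a nonzero vector v = Σ x_j α_j fixed by all generators s₀,…,s_n exists if and only if x = 1. -/
set_option maxHeartbeats 2000000


/-- In the generalized geometric representation `V_x` of the affine symmetric
group of type `Ã_n`, a nonzero vector fixed by all the generators `s_0, …, s_n`
exists if and only if `x = 1`.  (Equivalently, `V_x` is irreducible iff `x ≠ 1`.) -/
theorem stmt13 (n : ℕ) (hn : 2 ≤ n) (x : ℂ) (hx : x ≠ 0)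
    (κ : Fin (n + 1) → Fin (n + 1) → ℂ)
    (hκ : ∀ i j : Fin (n + 1), κ i j =
      if i = 0 ∧ j = Fin.last n then x
      else if i = Fin.last n ∧ j = 0 then x⁻¹
      else if (j : ℕ) = (i : ℕ) + 1 ∨ (i : ℕ) = (j : ℕ) + 1 then 1
      else 0)
    (act : Fin (n + 1) → (Fin (n + 1) → ℂ) → (Fin (n + 1) → ℂ))
    (hact : ∀ i v, act i v = fun l =>
      if l = i then -v i + ∑ j ∈ Finset.univ \ {i}, κ i j * v j else v l) :
    (∃ v : Fin (n + 1) → ℂ, v ≠ 0 ∧ ∀ i, act i v = v) ↔ x = 1 := by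
  have hone : ((1 : Fin (n + 1)) : ℕ) = 1 := by
    rw [Fin.val_one']; exact Nat.mod_eq_of_lt (by omega)
  have hzero : ((0 : Fin (n + 1)) : ℕ) = 0 := Fin.val_zero _
  -- the sum over `univ \ {i}` equals the full sum, since `κ i i = 0`
  have hsum : ∀ (v : Fin (n + 1) → ℂ) (i : Fin (n + 1)),
      ∑ j ∈ Finset.univ \ {i}, κ i j * v j = ∑ j, κ i j * v j := by
    intro v i
    rw [Finset.sum_sdiff_eq_sub (Finset.subset_univ _), Finset.sum_singleton]
    have hκii : κ i i = 0 := by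
      rw [hκ]
      have hi := i.isLt
      simp only [Fin.ext_iff, Fin.val_last, Fin.val_zero]
      split_ifs with h1 h2 h3 <;> first | rfl | (exfalso; omega)
    rw [hκii]; ring
  -- generic two-point sum helper
  have htwo : ∀ (a b : Fin (n + 1)) (F G : Fin (n + 1) → ℂ),
      ∑ j, ((if a = j then F j else 0) + (if b = j then G j else 0)) = F a + G b := by
    intro a b F G
    rw [Finset.sum_add_distrib, Finset.sum_ite_eq, Finset.sum_ite_eq]
    simp
  -- row 0
  have row0 : ∀ v : Fin (n + 1) → ℂ, ∑ j, κ 0 j * v j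
      = v 1 + x * v (Fin.last n) := by
    intro v
    have hpt : ∀ j, κ 0 j * v j
        = (if (1 : Fin (n + 1)) = j then v j else 0)
          + (if Fin.last n = j then x * v j else 0) := by
      intro j
      rcases j with ⟨jv, hjv⟩
      rw [hκ]
      simp only [Fin.ext_iff, Fin.val_zero, Fin.val_last, hone, true_and, and_true, or_false, false_or, and_false, false_and]
      split_ifs with h1 h2 h3 h4 h5 h6 h7 h8 h9 <;>
        first | ring1 | (exfalso; omega) | (exfalso; simp only [or_false, false_or] at *; omega)
    rw [Finset.sum_congr rfl fun j _ => hpt j, htwo]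
  -- row `last`
  have rowL : ∀ v : Fin (n + 1) → ℂ, ∑ j, κ (Fin.last n) j * v j
      = x⁻¹ * v 0 + v ⟨n - 1, by omega⟩ := by
    intro v
    have hpt : ∀ j, κ (Fin.last n) j * v j
        = (if (0 : Fin (n + 1)) = j then x⁻¹ * v j else 0)
          + (if (⟨n - 1, by omega⟩ : Fin (n + 1)) = j then v j else 0) := by
      intro j
      rcases j with ⟨jv, hjv⟩
      rw [hκ]
      simp only [Fin.ext_iff, Fin.val_zero, Fin.val_last, hone, true_and, and_true, or_false, false_or, and_false, false_and]
      split_ifs with h1 h2 h3 h4 h5 h6 h7 h8 h9 <;>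
        first | ring1 | (exfalso; omega) | (exfalso; simp only [or_false, false_or] at *; omega)
    rw [Finset.sum_congr rfl fun j _ => hpt j, htwo]
  -- middle rows
  have rowm : ∀ (v : Fin (n + 1) → ℂ) (i : Fin (n + 1))
      (hk1 : 1 ≤ (i : ℕ)) (hk2 : (i : ℕ) < n),
      ∑ j, κ i j * v j
        = v ⟨(i : ℕ) - 1, by omega⟩ + v ⟨(i : ℕ) + 1, by omega⟩ := by
    intro v i hk1 hk2
    have hpt : ∀ j, κ i j * v j
        = (if (⟨(i : ℕ) - 1, by omega⟩ : Fin (n + 1)) = j then v j else 0)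
          + (if (⟨(i : ℕ) + 1, by omega⟩ : Fin (n + 1)) = j then v j else 0) := by
      intro j
      rcases j with ⟨jv, hjv⟩
      rw [hκ]
      simp only [Fin.ext_iff, Fin.val_zero, Fin.val_last, hone, true_and, and_true, or_false, false_or, and_false, false_and]
      split_ifs with h1 h2 h3 h4 h5 h6 h7 h8 h9 <;>
        first | ring1 | (exfalso; omega) | (exfalso; simp only [or_false, false_or] at *; omega)
    rw [Finset.sum_congr rfl fun j _ => hpt j, htwo]
  constructor
  · -- forward direction
    rintro ⟨v, hv0, hfix⟩
    have key : ∀ i : Fin (n + 1), ∑ j, κ i j * v j = 2 * v i := by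
      intro i
      have h := congrFun (hfix i) i
      rw [hact] at h
      simp only [eq_self_iff_true, if_true] at h
      linear_combination h - hsum v i
    set f : ℕ → ℂ := fun k => if h : k < n + 1 then v ⟨k, h⟩ else 0 with hf
    have hfval : ∀ (k : ℕ) (h : k < n + 1), f k = v ⟨k, h⟩ := by
      intro k h; simp only [hf]; exact dif_pos h
    have hrec : ∀ k, 1 ≤ k → k < n → f (k - 1) + f (k + 1) = 2 * f k := by
      intro k hk1 hk2
      rw [hfval (k - 1) (by omega), hfval (k + 1) (by omega), hfval k (by omega)]
      exact (rowm v ⟨k, by omega⟩ hk1 hk2).symm.trans (key ⟨k, by omega⟩)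
    set d : ℂ := f 1 - f 0 with hd
    have lin : ∀ k, k ≤ n → f k = f 0 + (k : ℂ) * d := by
      intro k
      induction k using Nat.strong_induction_on with
      | _ k ih =>
        intro hk
        rcases k with _ | k
        · simp
        rcases k with _ | k
        · rw [hd]; push_cast; ring
        · have h1 := hrec (k + 1) (by omega) (by omega)
          have h2 := ih (k + 1) (by omega) (by omega)
          have h3 := ih k (by omega) (by omega)
          have hsimp : k + 1 - 1 = k := by omega
          rw [hsimp] at h1
          push_cast at h2 h3 ⊢
          linear_combination h1 - h3 + 2 * h2
    have e0 : (0 : Fin (n + 1)) = ⟨0, by omega⟩ := Fin.ext hzero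
    have e1 : (1 : Fin (n + 1)) = ⟨1, by omega⟩ := Fin.ext hone
    have hA : f 1 + x * f n = 2 * f 0 := by
      have h := key 0
      rw [row0 v, e0, e1] at h
      rw [hfval 1 (by omega), hfval n (by omega), hfval 0 (by omega)]
      exact h
    have hB : x⁻¹ * f 0 + f (n - 1) = 2 * f n := by
      have h := key (Fin.last n)
      rw [rowL v, e0] at h
      rw [hfval 0 (by omega), hfval (n - 1) (by omega), hfval n (by omega)]
      exact h
    have hfn : f n = f 0 + (n : ℂ) * d := lin n le_rfl
    have hfn1 : f (n - 1) = f 0 + ((n : ℂ) - 1) * d := by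
      rw [lin (n - 1) (by omega), Nat.cast_sub (by omega : 1 ≤ n), Nat.cast_one]
    have hf1 : f 1 = f 0 + d := by rw [hd]; ring
    have hxinv : x * x⁻¹ = 1 := mul_inv_cancel₀ hx
    rw [hfn1, hfn] at hB
    rw [hf1, hfn] at hA
    have hB2 : f 0 + x * (f 0 + ((n : ℂ) - 1) * d) = x * (2 * (f 0 + (n : ℂ) * d)) := by
      linear_combination x * hB - f 0 * hxinv
    have hkey : (x - 1) * d = 0 := by
      linear_combination (-1 : ℂ) * hA - hB2
    rcases mul_eq_zero.mp hkey with h | h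
    · linear_combination h
    · -- d = 0 : all coordinates equal f 0, which is nonzero
      have hf0 : f 0 ≠ 0 := by
        intro hz
        apply hv0
        funext i
        have h1 : f i.val = 0 := by
          rw [lin i.val (by omega), h, hz]; ring
        have h2 : v i = f i.val := by rw [hfval i.val i.isLt]
        rw [Pi.zero_apply, h2, h1]
      rw [h] at hA
      have hxf : x * f 0 = 1 * f 0 := by linear_combination hA
      exact mul_right_cancel₀ hf0 hxf
  · -- reverse direction: the constant vector is fixed when x = 1
    intro hx1
    subst hx1
    refine ⟨fun _ => 1, ?_, ?_⟩
    · intro hcontra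
      have h0 := congrFun hcontra 0
      simp at h0
    · intro i
      funext l
      rw [hact]
      show (if l = i then -(1 : ℂ) + ∑ j ∈ Finset.univ \ {i}, κ i j * 1 else 1) = 1
      split_ifs with hl
      · rw [hsum]
        rcases eq_or_ne i 0 with h0 | h0
        · rw [h0, row0]; norm_num
        rcases eq_or_ne i (Fin.last n) with hL | hL
        · rw [hL, rowL]; norm_num
        · have hk1 : 1 ≤ (i : ℕ) := by
            by_contra hcc
            exact h0 (Fin.ext (by simp only [Fin.val_zero]; omega))
          have hk2 : (i : ℕ) < n := by
            by_contra hcc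
            have := i.isLt
            exact hL (Fin.ext (by simp only [Fin.val_last]; omega))
          rw [rowm _ i hk1 hk2]
          norm_num
      · rfl
end

section
/- Let W be a Coxeter group with finite generating set S and all m_{rt} < ∞, and let V = ⊕_{s∈S} ℂα_s be a generalized geometric representation (each s ∈ S acts by a reflection with reflection vector α_s, and the α_s form a basis). Then for any distinct r, t ∈ S, the 2-dimensional subspace ℂα_r ⊕ ℂα_t is invariant under the dihedral subgroup ⟨r, t⟩. -/
/-- In a generalized geometric representation of a Coxeter group `W` (each
simple generator acts as a reflection whose reflection vectors form a basis,
and all `m_{rt} < ∞`), the span of `α_r, α_t` is invariant under the dihedral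
subgroup `⟨r, t⟩` for any distinct `r, t ∈ S`. -/
theorem stmt14 {S : Type*} [Fintype S] [DecidableEq S] {W : Type*} [Group W]
    (M : CoxeterMatrix S) (cs : CoxeterSystem M W)
    (hfin : ∀ r t : S, M r t ≠ 0)
    {V : Type*} [AddCommGroup V] [Module ℂ V]
    (ρ : Representation ℂ W V) (b : Module.Basis S ℂ V)
    (hrefl : ∀ s : S, ∃ H : Submodule ℂ V,
      IsCompl H (Submodule.span ℂ {b s}) ∧ ∀ v ∈ H, ρ (cs.simple s) v = v)
    (hneg : ∀ s : S, ρ (cs.simple s) (b s) = -(b s))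
    (r t : S) (hrt : r ≠ t) :
    ∀ w ∈ Subgroup.closure ({cs.simple r, cs.simple t} : Set W),
      ∀ v ∈ Submodule.span ℂ ({b r, b t} : Set V),
        ρ w v ∈ Submodule.span ℂ ({b r, b t} : Set V) := by
  set P : Submodule ℂ V := Submodule.span ℂ ({b r, b t} : Set V) with hP
  -- Key: each simple s with b s ∈ P maps P into itself.
  have key : ∀ s : S, b s ∈ P → ∀ v ∈ P, ρ (cs.simple s) v ∈ P := by
    intro s hs v hv
    obtain ⟨H, hcompl, hfix⟩ := hrefl s
    obtain ⟨h, k, hadd, -⟩ := Submodule.existsUnique_add_of_isCompl hcompl v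
    obtain ⟨c, hc⟩ := Submodule.mem_span_singleton.mp k.2
    have : ρ (cs.simple s) v = h + c • (-(b s)) := by
      rw [← hadd, map_add, hfix h h.2, ← hc, map_smul, hneg s]
    have hvP : ρ (cs.simple s) v = v - (2 * c) • b s := by
      rw [this, ← hadd, ← hc]
      module
    rw [hvP]
    exact P.sub_mem hv (P.smul_mem _ hs)
  have hbr : b r ∈ P := Submodule.subset_span (by simp)
  have hbt : b t ∈ P := Submodule.subset_span (by simp [hP])
  intro w hw
  -- strengthen: invariance for both w and w⁻¹
  have main : (∀ v ∈ P, ρ w v ∈ P) ∧ (∀ v ∈ P, ρ w⁻¹ v ∈ P) := by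
    induction hw using Subgroup.closure_induction with
    | mem x hx =>
      rcases hx with h | h <;> subst h <;>
        rw [cs.inv_simple] <;>
        exact ⟨key _ (by assumption), key _ (by assumption)⟩
    | one => simp
    | mul x y hx hy ihx ihy =>
      refine ⟨fun v hv => ?_, fun v hv => ?_⟩
      · rw [map_mul]; exact ihx.1 _ (ihy.1 v hv)
      · rw [mul_inv_rev, map_mul]; exact ihy.2 _ (ihx.2 v hv)
    | inv x hx ih => exact ⟨ih.2, by simpa using ih.1⟩
  exact main.1
end

section
/- Let W be a Coxeter group with generating set S, all m_{rt} < ∞, and let V = ⊕_{s∈S} ℂα_s be a generalized geometric representation whose associated graph G̃ is connected (i.e., for all adjacent r,t in G̃ the span ℂ⟨α_r, α_t⟩ is an irreducible ⟨r,t⟩-representation, and G̃ connects all of S via such edges). Then every proper subrepresentation U ⊊ V carries the trivial W-action. -/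
/-- Let `V` be a generalized geometric representation of a Coxeter group `W`
(all `m_{rt} < ∞`) whose associated graph `G̃` is connected: for every edge
`{r,t}` of `G̃`, the span of `α_r, α_t` is an irreducible `⟨r,t⟩`-module.
Then every proper subrepresentation `U ⊊ V` carries the trivial `W`-action. -/
theorem stmt15 {S W V : Type*} [Fintype S] [DecidableEq S] [Group W]
    [AddCommGroup V] [Module ℂ V]
    (M : CoxeterMatrix S) (cs : CoxeterSystem M W) (hfin : ∀ r t : S, M r t ≠ 0)
    (ρ : Representation ℂ W V) (b : Module.Basis S ℂ V)
    (hneg : ∀ s : S, ρ (cs.simple s) (b s) = -(b s))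
    (hrefl : ∀ s : S, ∃ H : Submodule ℂ V,
      IsCompl H (Submodule.span ℂ {b s}) ∧ ∀ v ∈ H, ρ (cs.simple s) v = v)
    (Gt : SimpleGraph S) (hconn : Gt.Connected)
    (hirr : ∀ r t : S, Gt.Adj r t → ∀ U : Submodule ℂ V,
      U ≤ Submodule.span ℂ ({b r, b t} : Set V) →
      (∀ v ∈ U, ρ (cs.simple r) v ∈ U) → (∀ v ∈ U, ρ (cs.simple t) v ∈ U) →
      U = ⊥ ∨ U = Submodule.span ℂ ({b r, b t} : Set V)) :
    ∀ U : Submodule ℂ V, (∀ s : S, ∀ v ∈ U, ρ (cs.simple s) v ∈ U) → U ≠ ⊤ →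
      ∀ w : W, ∀ v ∈ U, ρ w v = v := by
  intro U hU hUtop
  -- Step A: ρ(s) w = w + c • b s for some scalar c
  have hA : ∀ s : S, ∀ w : V, ∃ c : ℂ, ρ (cs.simple s) w = w + c • b s := by
    intro s w
    obtain ⟨H, ⟨hdis, hcod⟩, hfix⟩ := hrefl s
    have hw : w ∈ H ⊔ Submodule.span ℂ {b s} := by
      rw [hcod.eq_top]; trivial
    obtain ⟨h, hh, p, hp, hhp⟩ := Submodule.mem_sup.mp hw
    obtain ⟨c, rfl⟩ := Submodule.mem_span_singleton.mp hp
    refine ⟨-2 * c, ?_⟩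
    have hρ : ρ (cs.simple s) w = h + c • (-(b s)) := by
      rw [← hhp, map_add, hfix h hh, map_smul, hneg]
    rw [hρ, ← hhp]
    module
  -- Step B: if v ∈ U is not fixed by s, then b s ∈ U
  have hB : ∀ s : S, ∀ v ∈ U, ρ (cs.simple s) v ≠ v → b s ∈ U := by
    intro s v hv hne
    obtain ⟨c, hc⟩ := hA s v
    have hc0 : c ≠ 0 := by
      rintro rfl
      simp only [zero_smul, add_zero] at hc
      exact hne hc
    have h1 : c • b s ∈ U := by
      have h2 := U.sub_mem (hU s v hv) hv
      rwa [hc, add_sub_cancel_left] at h2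
    have h3 := U.smul_mem c⁻¹ h1
    rwa [smul_smul, inv_mul_cancel₀ hc0, one_smul] at h3
  -- Step D: propagate membership along edges
  have hD : ∀ r t : S, Gt.Adj r t → b r ∈ U → b t ∈ U := by
    intro r t hadj hbr
    set Sp := Submodule.span ℂ ({b r, b t} : Set V) with hSp
    have hspan : ∀ s : S, (s = r ∨ s = t) → ∀ v ∈ Sp, ρ (cs.simple s) v ∈ Sp := by
      intro s hs v hvS
      obtain ⟨c, hc⟩ := hA s v
      rw [hc]
      refine Sp.add_mem hvS (Sp.smul_mem c ?_)
      rcases hs with rfl | rfl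
      · exact Submodule.subset_span (by simp)
      · exact Submodule.subset_span (by simp)
    have h2 : ∀ v ∈ U ⊓ Sp, ρ (cs.simple r) v ∈ U ⊓ Sp := fun v hv =>
      ⟨hU r v hv.1, hspan r (Or.inl rfl) v hv.2⟩
    have h3 : ∀ v ∈ U ⊓ Sp, ρ (cs.simple t) v ∈ U ⊓ Sp := fun v hv =>
      ⟨hU t v hv.1, hspan t (Or.inr rfl) v hv.2⟩
    have hbrmem : b r ∈ U ⊓ Sp := ⟨hbr, Submodule.subset_span (by simp)⟩
    rcases hirr r t hadj (U ⊓ Sp) inf_le_right h2 h3 with h | h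
    · rw [h] at hbrmem
      exact absurd (Submodule.mem_bot ℂ |>.mp hbrmem) (b.ne_zero r)
    · have : b t ∈ U ⊓ Sp := by
        rw [h]; exact Submodule.subset_span (by simp)
      exact this.1
  -- Step E: no basis vector lies in U
  have hE : ∀ s : S, b s ∉ U := by
    intro s hs
    apply hUtop
    have step : ∀ (a c : S) (w : Gt.Walk a c), b a ∈ U → b c ∈ U := by
      intro a c w
      induction w with
      | nil => exact id
      | cons h p ih => exact fun ha => ih (hD _ _ h ha)
    have hall : ∀ t : S, b t ∈ U := by
      intro t
      obtain ⟨w⟩ := hconn.preconnected s t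
      exact step s t w hs
    rw [eq_top_iff, ← b.span_eq]
    exact Submodule.span_le.mpr (by rintro x ⟨i, rfl⟩; exact hall i)
  -- Step F: every simple fixes U pointwise
  have hF : ∀ s : S, ∀ v ∈ U, ρ (cs.simple s) v = v := by
    intro s v hv
    by_contra hne
    exact hE s (hB s v hv hne)
  -- conclude for all w
  intro w v hv
  let K : Subgroup W :=
    { carrier := {w | ρ w v = v}
      one_mem' := by simp
      mul_mem' := by
        intro a c ha hc
        simp only [Set.mem_setOf_eq] at *
        rw [map_mul, Module.End.mul_apply, hc, ha]
      inv_mem' := by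
        intro a ha
        simp only [Set.mem_setOf_eq] at *
        calc ρ a⁻¹ v = ρ a⁻¹ (ρ a v) := by rw [ha]
        _ = ρ (a⁻¹ * a) v := by rw [map_mul, Module.End.mul_apply]
        _ = v := by simp }
  have hK : w ∈ K := by
    have : Subgroup.closure (Set.range cs.simple) ≤ K :=
      Subgroup.closure_le K |>.mpr (by rintro x ⟨i, rfl⟩; exact hF i v hv)
    exact this (by rw [cs.subgroup_closure_range_simple]; trivial)
  exact hK
end

section
/- Let W = 𝔖_{n+1} (n ≥ 4) be the symmetric group with its standard Coxeter generating set S = {s₁,…,s_n} (m_{s_i s_{i+1}} = 3, m_{s_i s_j} = 2 for |i−j| ≥ 2). Then every admissible partition of S is either trivial (one block) or discrete (all blocks singletons). Here a partition S = I₁ ⊔ ⋯ ⊔ I_k is admissible if (1) for all i ≠ j, gcd{m_{rt} : r ∈ I_i, t ∈ I_j, m_{rt} < ∞} > 1, and (2) no block I_i splits as J ⊔ J′ with m_{rt} = ∞ for all r ∈ J, t ∈ J′. -/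
private lemma gcd23 (d : ℕ) (hd : 1 < d) (h2 : d ∣ 2) (h3 : d ∣ 3) : False := by
  have hle : d ≤ 2 := Nat.le_of_dvd (by norm_num) h2
  have : d = 2 := by omega
  subst this
  omega

/-- For the symmetric group `𝔖_{n+1}` (`n ≥ 4`) with its standard Coxeter
generators `s_1, …, s_n`, every admissible partition of `S` (modelled as a
setoid) is either trivial (one block, `σ = ⊤`) or discrete (all singletons,
`σ = ⊥`).  Condition (1): for generators in different blocks, some `d > 1`
divides all the finite Coxeter matrix entries between the blocks (`M r t = 0`
encodes `m_{rt} = ∞`).  Condition (2): no block splits into two nonempty parts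
with all entries between them infinite. -/
theorem stmt17 (n : ℕ) (hn : 4 ≤ n) (M : Fin n → Fin n → ℕ)
    (hM : ∀ i j : Fin n, M i j = if i = j then 1
      else if (i : ℕ) + 1 = (j : ℕ) ∨ (j : ℕ) + 1 = (i : ℕ) then 3 else 2)
    (σ : Setoid (Fin n))
    (h1 : ∀ r t : Fin n, ¬ σ.r r t →
      ∃ d : ℕ, 1 < d ∧ ∀ r' t' : Fin n, σ.r r' r → σ.r t' t → M r' t' ≠ 0 → d ∣ M r' t')
    (h2 : ∀ r : Fin n, ¬ ∃ J J' : Set (Fin n), J.Nonempty ∧ J'.Nonempty ∧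
      Disjoint J J' ∧ J ∪ J' = {u | σ.r u r} ∧ ∀ u ∈ J, ∀ v ∈ J', M u v = 0) :
    σ = ⊤ ∨ σ = ⊥ := by
  classical
  have Mne0 : ∀ i j : Fin n, M i j ≠ 0 := by
    intro i j
    rw [hM]
    split_ifs <;> omega
  have Mval2 : ∀ i j : Fin n, (i : ℕ) ≠ j → ¬((i : ℕ) + 1 = j ∨ (j : ℕ) + 1 = i) →
      M i j = 2 := by
    intro i j hij hadj
    rw [hM, if_neg, if_neg hadj]
    simp only [Fin.ext_iff]
    omega
  have Mval3 : ∀ i j : Fin n, ((i : ℕ) + 1 = j ∨ (j : ℕ) + 1 = i) → M i j = 3 := by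
    intro i j hadj
    rw [hM, if_neg, if_pos hadj]
    simp only [Fin.ext_iff]
    omega
  by_cases hbot : σ = ⊥
  · exact Or.inr hbot
  left
  have hex : ∃ a b : Fin n, σ.r a b ∧ a ≠ b := by
    by_contra h
    push_neg at h
    apply hbot
    refine le_antisymm (fun x y hxy => ?_) bot_le
    have hxy' : x = y := h x y hxy
    · exact hxy' ▸ (⊥ : Setoid (Fin n)).refl x
  obtain ⟨a, b, hab, hne⟩ := hex
  -- key lemma: if a block has two distinct elements, it contains all neighbors
  have key : ∀ a b m : Fin n, σ.r a b → a ≠ b →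
      ((a : ℕ) + 1 = m ∨ (m : ℕ) + 1 = a) → σ.r a m := by
    intro a b m hab hne hadj
    by_contra ham
    obtain ⟨d, hd1, hdvd⟩ := h1 a m ham
    have hdam : d ∣ M a m := hdvd a m (σ.refl a) (σ.refl m) (Mne0 a m)
    rw [Mval3 a m hadj] at hdam
    have hbm : (b : ℕ) ≠ (m : ℕ) := by
      intro h
      exact ham ((Fin.ext h : b = m) ▸ hab)
    have hdbm : d ∣ M b m := hdvd b m (σ.symm hab) (σ.refl m) (Mne0 b m)
    have hbadj : (b : ℕ) + 1 = m ∨ (m : ℕ) + 1 = b := by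
      by_contra h
      rw [Mval2 b m hbm h] at hdbm
      exact gcd23 d hd1 hdbm hdam
    have hne' : (a : ℕ) ≠ (b : ℕ) := fun h => hne (Fin.ext h)
    -- so {a,b} = {m-1, m+1} (as values)
    have hm1 : 1 ≤ (m : ℕ) ∧ (m : ℕ) + 1 < n := by
      rcases hadj with ha | ha <;> rcases hbadj with hb | hb <;>
        first
          | omega
          | (constructor <;> [omega; (first | exact ha ▸ a.isLt | exact hb ▸ b.isLt |
              omega)])
    -- auxiliary: a vertex at distance 2 from m yields a contradiction
    have aux : ∀ m' : Fin n, ((m' : ℕ) = (m : ℕ) + 2 ∨ (m : ℕ) = (m' : ℕ) + 2) → False := by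
      intro m' hm'
      have hMm'm : M m' m = 2 := Mval2 m' m (by omega) (by omega)
      by_cases hr : σ.r m' a
      · have hd2 : d ∣ M m' m := hdvd m' m hr (σ.refl m) (Mne0 m' m)
        rw [hMm'm] at hd2
        exact gcd23 d hd1 hd2 hdam
      · obtain ⟨e, he1, hedvd⟩ := h1 a m' (fun h => hr (σ.symm h))
        have e1 : e ∣ M a m' := hedvd a m' (σ.refl a) (σ.refl m') (Mne0 a m')
        have e2 : e ∣ M b m' := hedvd b m' (σ.symm hab) (σ.refl m') (Mne0 b m')
        have hvals : (M a m' = 2 ∧ M b m' = 3) ∨ (M a m' = 3 ∧ M b m' = 2) := by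
          rcases hadj with ha | ha <;> rcases hbadj with hb | hb <;>
            rcases hm' with hm' | hm'
          all_goals first
            | omega
            | (left; exact ⟨Mval2 a m' (by omega) (by omega), Mval3 b m' (by omega)⟩)
            | (right; exact ⟨Mval3 a m' (by omega), Mval2 b m' (by omega) (by omega)⟩)
        rcases hvals with ⟨hA, hB⟩ | ⟨hA, hB⟩
        · rw [hA] at e1; rw [hB] at e2
          exact gcd23 e he1 e1 e2
        · rw [hA] at e1; rw [hB] at e2
          exact gcd23 e he1 e2 e1
    by_cases hcase : (m : ℕ) + 2 < n
    · exact aux ⟨(m : ℕ) + 2, hcase⟩ (Or.inl rfl)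
    · have h2m : 2 ≤ (m : ℕ) := by omega
      exact aux ⟨(m : ℕ) - 2, by omega⟩ (Or.inr (by simp; omega))
  -- closure of the block of a under adjacency
  have step : ∀ x y : Fin n, σ.r x a → ((x : ℕ) + 1 = y ∨ (y : ℕ) + 1 = x) → σ.r y a := by
    intro x y hxa hadj
    by_cases hx : x = a
    · subst hx
      exact σ.symm (key x b y hab hne hadj)
    · have hxy : σ.r x y := key x a y hxa hx hadj
      exact σ.trans (σ.symm hxy) hxa
  have all : ∀ x : Fin n, σ.r x a := by
    have main : ∀ d : ℕ, ∀ x : Fin n, ((x : ℕ) = (a : ℕ) + d ∨ (a : ℕ) = (x : ℕ) + d) →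
        σ.r x a := by
      intro d
      induction d with
      | zero =>
        intro x hx
        have : x = a := Fin.ext (by omega)
        exact this ▸ σ.refl a
      | succ d ih =>
        intro x hx
        rcases hx with hx | hx
        · have hlt : (a : ℕ) + d < n := by
            have := x.isLt; omega
          have hy := ih ⟨(a : ℕ) + d, hlt⟩ (Or.inl rfl)
          exact step _ x hy (Or.inl (by simp; omega))
        · have hlt : (x : ℕ) + 1 < n := by
            have := a.isLt; omega
          have hy := ih ⟨(x : ℕ) + 1, hlt⟩ (Or.inr (by simp; omega))
          exact step _ x hy (Or.inr (by simp))
    intro x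
    rcases le_total (x : ℕ) (a : ℕ) with h | h
    · exact main ((a : ℕ) - x) x (Or.inr (by omega))
    · exact main ((x : ℕ) - a) x (Or.inl (by omega))
  refine le_antisymm le_top (fun x y _ => ?_)
  exact σ.trans (all x) (σ.symm (all y))
end
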